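/- Let d ≥ 1, let x ∈ ℝ^d, let 1 ≤ k ≤ d be integers, and let c ∈ [0,1]. Let H ⊆ {1,…,d} be a set with h := |H| ≤ k such that every i ∈ H satisfies x_i² ≥ c·‖x‖₂²/d. Let R be a uniformly random subset of {1,…,d} \ H of size k − h, and set S = H ∪ R. Then E‖x − x_S‖₂² ≤ (1 − c·k/d)·‖x‖₂², where the expectation is over the random choice of R. In particular, when every coordinate kept in H satisfies x_i² ≥ ‖x‖₂²/d (e.g. when c = 1), the operator keeping the detected heavy coordinates H exactly and filling the remaining k − |H| slots with uniformly random non-heavy coordinates is a (k/d)-contraction in expectation. -/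

import Mathlib

open Finset

/-- `maskedVector x S` is the vector in `ℝ^d` agreeing with `x` on the coordinates
in `S` and equal to zero elsewhere. -/
noncomputable def maskedVector {d : ℕ} (x : EuclideanSpace ℝ (Fin d)) (S : Finset (Fin d)) :
    EuclideanSpace ℝ (Fin d) :=
  (EuclideanSpace.equiv (Fin d) ℝ).symm fun i => if i ∈ S then x i else 0

lemma masked_norm_sq {d : ℕ} (x : EuclideanSpace ℝ (Fin d)) (S : Finset (Fin d)) :
    ‖x - maskedVector x S‖ ^ 2 = ∑ i ∈ Finset.univ \ S, x i ^ 2 := by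
  rw [EuclideanSpace.norm_eq, Real.sq_sqrt (by positivity)]
  have h : ∀ i : Fin d, (x - maskedVector x S) i = if i ∈ S then 0 else x i := by
    intro i
    have : (x - maskedVector x S) i = x i - maskedVector x S i := rfl
    rw [this]
    simp only [maskedVector, EuclideanSpace.equiv, PiLp.continuousLinearEquiv_symm_apply,
      PiLp.toLp_apply]
    split <;> simp
  calc ∑ i, ‖(x - maskedVector x S) i‖ ^ 2
      = ∑ i, (if i ∈ S then 0 else x i ^ 2) := by
        refine Finset.sum_congr rfl fun i _ => ?_
        rw [h i, Real.norm_eq_abs, sq_abs]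
        split <;> simp
    _ = ∑ i ∈ Finset.univ \ S, x i ^ 2 := by
        rw [show ((Finset.univ : Finset (Fin d)) \ S) = Finset.univ.filter (fun i => i ∉ S) by
          ext i; simp]
        rw [Finset.sum_filter]
        exact Finset.sum_congr rfl fun i _ => by split <;> simp_all

lemma count_avoid {d m : ℕ} (C : Finset (Fin d)) (i : Fin d) (hi : i ∈ C) :
    ((Finset.powersetCard m C).filter (fun R => i ∉ R)).card
      = (C.card - 1).choose m := by
  have : (Finset.powersetCard m C).filter (fun R => i ∉ R)
      = Finset.powersetCard m (C.erase i) := by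
    ext R
    simp only [Finset.mem_filter, Finset.mem_powersetCard, Finset.subset_erase]
    tauto
  rw [this, Finset.card_powersetCard, Finset.card_erase_of_mem hi]

lemma choose_ratio (n m : ℕ) (hn : 1 ≤ n) :
    n * (n - 1).choose m = n.choose m * (n - m) := by
  obtain ⟨t, rfl⟩ : ∃ t, n = t + 1 := ⟨n - 1, by omega⟩
  simp only [Nat.add_sub_cancel]
  rw [Nat.add_one_mul_choose_eq t m, Nat.choose_succ_right_eq (t + 1) m]


/-- Combinatorial core of the HEAVYMIX contraction lemma: keep a set `H` of at
most `k` detected coordinates, each satisfying `x i ^ 2 ≥ c ‖x‖₂² / d`, and fill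
the remaining `k - |H|` slots with a uniformly random subset `R` of the other
coordinates; then with `S = H ∪ R`,
`E ‖x - x_S‖₂² ≤ (1 - c k / d) ‖x‖₂²`. -/
theorem heavymix_contraction (d k : ℕ) (hd : 1 ≤ d) (hk1 : 1 ≤ k) (hkd : k ≤ d)
    (c : ℝ) (hc0 : 0 ≤ c) (hc1 : c ≤ 1)
    (x : EuclideanSpace ℝ (Fin d))
    (H : Finset (Fin d)) (hHcard : H.card ≤ k)
    (hHheavy : ∀ i ∈ H, c * ‖x‖ ^ 2 / d ≤ x i ^ 2) :
    (∑ R ∈ Finset.powersetCard (k - H.card) ((Finset.univ : Finset (Fin d)) \ H),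
        ‖x - maskedVector x (H ∪ R)‖ ^ 2) /
      ((Finset.powersetCard (k - H.card) ((Finset.univ : Finset (Fin d)) \ H)).card : ℝ)
      ≤ (1 - c * k / d) * ‖x‖ ^ 2 := by
  set h := H.card with hh
  set m := k - h with hm
  set C := (Finset.univ : Finset (Fin d)) \ H with hC
  have hhd : h ≤ d := le_trans (Finset.card_le_card (Finset.subset_univ H)) (by simp)
  have hCcard : C.card = d - h := by
    rw [hC, Finset.card_sdiff_of_subset (Finset.subset_univ H)]
    simp [hh]
  have hmn : m ≤ C.card := by omega
  set n := C.card with hn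
  -- the sum over R
  have key : ∑ R ∈ Finset.powersetCard m C, ‖x - maskedVector x (H ∪ R)‖ ^ 2
      = (∑ i ∈ C, x i ^ 2) * ((n - 1).choose m : ℝ) := by
    have step1 : ∀ R ∈ Finset.powersetCard m C,
        ‖x - maskedVector x (H ∪ R)‖ ^ 2 = ∑ i ∈ C, (if i ∈ R then 0 else x i ^ 2) := by
      intro R hR
      rw [Finset.mem_powersetCard] at hR
      rw [masked_norm_sq]
      have : (Finset.univ : Finset (Fin d)) \ (H ∪ R) = C.filter (fun i => i ∉ R) := by
        ext i
        simp only [hC, Finset.mem_sdiff, Finset.mem_union, Finset.mem_filter, Finset.mem_univ,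
          true_and]
        tauto
      rw [this, Finset.sum_filter]
      exact Finset.sum_congr rfl fun i _ => by split <;> simp_all
    rw [Finset.sum_congr rfl step1, Finset.sum_comm]
    rw [Finset.sum_mul]
    refine Finset.sum_congr rfl fun i hi => ?_
    have : ∀ R ∈ Finset.powersetCard m C, (if i ∈ R then 0 else x i ^ 2)
        = if i ∉ R then x i ^ 2 else 0 := fun R _ => by split <;> simp_all
    rw [Finset.sum_congr rfl this, ← Finset.sum_filter, Finset.sum_const, nsmul_eq_mul,
      count_avoid C i hi, mul_comm]
  have hNcard : ((Finset.powersetCard m C).card : ℝ) = (n.choose m : ℝ) := by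
    rw [Finset.card_powersetCard]
  rw [key, hNcard]
  have hNpos : 0 < n.choose m := Nat.choose_pos hmn
  set T := ∑ i ∈ C, x i ^ 2 with hT
  have hT0 : 0 ≤ T := Finset.sum_nonneg fun i _ => sq_nonneg _
  have hX0 : (0 : ℝ) ≤ ‖x‖ ^ 2 := sq_nonneg _
  have hdr : (0 : ℝ) < d := by exact_mod_cast hd
  have hrhs0 : 0 ≤ (1 - c * k / d) := by
    have : c * k ≤ d := by
      calc c * k ≤ 1 * k := by apply mul_le_mul_of_nonneg_right hc1 (by positivity)
        _ = k := one_mul _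
        _ ≤ d := by exact_mod_cast hkd
    rw [sub_nonneg, div_le_one hdr]
    exact this
  rcases Nat.eq_zero_or_pos n with hn0 | hn1
  · -- C is empty
    have : C = ∅ := Finset.card_eq_zero.mp hn0
    rw [hT, this]
    simp only [Finset.sum_empty, zero_mul, zero_div]
    positivity
  · -- main case
    have hratio : ((n - 1).choose m : ℝ) / (n.choose m : ℝ) = ((n - m : ℕ) : ℝ) / (n : ℝ) := by
      rw [div_eq_div_iff (Nat.cast_pos.mpr hNpos).ne' (Nat.cast_pos.mpr hn1).ne']
      have h1 := choose_ratio n m hn1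
      have h2 : (n - 1).choose m * n = (n - m) * n.choose m := by
        rw [mul_comm, h1, mul_comm]
      exact_mod_cast h2
    rw [div_eq_mul_inv, mul_assoc, ← div_eq_mul_inv, hratio]
    have hnm : n - m = d - k := by omega
    rw [hnm]
    -- bound T
    have hTbound : T ≤ ‖x‖ ^ 2 - h * (c * ‖x‖ ^ 2 / d) := by
      have hsplit : (∑ i, x i ^ 2) = T + ∑ i ∈ H, x i ^ 2 := by
        rw [hT, hC, Finset.sum_sdiff (Finset.subset_univ H)]
      have hnorm : ‖x‖ ^ 2 = ∑ i, x i ^ 2 := by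
        rw [EuclideanSpace.norm_eq, Real.sq_sqrt (by positivity)]
        exact Finset.sum_congr rfl fun i _ => by rw [Real.norm_eq_abs, sq_abs]
      have hHsum : (h : ℝ) * (c * ‖x‖ ^ 2 / d) ≤ ∑ i ∈ H, x i ^ 2 := by
        calc (h : ℝ) * (c * ‖x‖ ^ 2 / d) = ∑ _i ∈ H, c * ‖x‖ ^ 2 / d := by
              rw [Finset.sum_const, nsmul_eq_mul]
          _ ≤ ∑ i ∈ H, x i ^ 2 := Finset.sum_le_sum hHheavy
      linarith [hsplit, hnorm, hHsum]
    -- final arithmetic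
    have hdk : ((d - k : ℕ) : ℝ) = (d : ℝ) - k := by push_cast [hkd]; ring
    have hdh : ((n : ℕ) : ℝ) = (d : ℝ) - h := by
      rw [hCcard]; push_cast [hhd]; ring
    rw [hdk, hdh]
    have hdhpos : (0 : ℝ) < (d : ℝ) - h := by
      have : h < d := by omega
      have : (h : ℝ) < d := by exact_mod_cast this
      linarith
    rw [← mul_div_assoc, div_le_iff₀ hdhpos]
    have hstep : T * ((d : ℝ) - k) ≤ (‖x‖ ^ 2 - h * (c * ‖x‖ ^ 2 / d)) * ((d : ℝ) - k) := by
      apply mul_le_mul_of_nonneg_right hTbound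
      have : (k : ℝ) ≤ d := by exact_mod_cast hkd
      linarith
    refine le_trans hstep ?_
    have hkh : (h : ℝ) ≤ k := by exact_mod_cast hHcard
    have hkdr : (k : ℝ) ≤ d := by exact_mod_cast hkd
    have hhk0 : (0 : ℝ) ≤ h := Nat.cast_nonneg _
    have hdne : (d : ℝ) ≠ 0 := hdr.ne'
    have e1 : (‖x‖ ^ 2 - ↑h * (c * ‖x‖ ^ 2 / ↑d)) = ((d : ℝ) - c * h) * ‖x‖ ^ 2 / d := by
      field_simp
    have e2 : (1 - c * ↑k / ↑d) * ‖x‖ ^ 2 = ((d : ℝ) - c * k) * ‖x‖ ^ 2 / d := by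
      field_simp
    rw [e1, e2, div_mul_eq_mul_div, div_mul_eq_mul_div, div_le_div_iff₀ hdr hdr]
    nlinarith [mul_nonneg (mul_nonneg (mul_nonneg (mul_pos hdr hdr).le
      (sub_nonneg.2 hc1)) (sub_nonneg.2 hkh)) hX0]
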